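/- There exists a constant C > 0 depending only on λ and α such that for every step size t ∈ (0, 1], every k ≥ 0 and every initial value φ ≥ 0, E[Φₖ²] ≤ C (φ² + φ + 1) e^{(2λ + α²) k t}. -/

import Mathlib

open MeasureTheory Real

/-- Standard Gaussian density on ℝ. -/
noncomputable def gaussDensity (z : ℝ) : ℝ := Real.exp (-z ^ 2 / 2) / Real.sqrt (2 * Real.pi)

/-- One-step update of the conditional odds process upon observing a normalized
increment `z` after a waiting time `t`, starting from odds `φ`. -/
noncomputable def jfun (lam alp t φ z : ℝ) : ℝ :=
  Real.exp (alp * z * Real.sqrt t + (lam - alp ^ 2 / 2) * t) * φ +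
    ∫ u in (0:ℝ)..t, lam * Real.exp ((lam + alp * z / Real.sqrt t) * u - alp ^ 2 * u ^ 2 / (2 * t))


/-- The discretely observed odds chain: `Φ₀ = φ` and `Φₖ = j(t, Φₖ₋₁, Zₖ)`. -/
noncomputable def oddsChain {Ω : Type*} (lam alp t φ : ℝ) (Z : ℕ → Ω → ℝ) : ℕ → Ω → ℝ
  | 0 => fun _ => φ
  | k + 1 => fun ω => jfun lam alp t (oddsChain lam alp t φ Z k ω) (Z (k + 1) ω)

/-- The filtration `Fₖ = σ(Z₁, …, Zₖ)` generated by the first `k` observations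
(`F₀` is trivial). -/
def obsFiltration {Ω : Type*} (Z : ℕ → Ω → ℝ) (k : ℕ) : MeasurableSpace Ω :=
  ⨆ i ∈ Set.Icc 1 k, MeasurableSpace.comap (Z i) inferInstance

/-! ### Auxiliary definitions and lemmas -/

open ProbabilityTheory
open scoped ENNReal NNReal

noncomputable def Afun (lam alp t z : ℝ) : ℝ :=
  Real.exp (alp * z * Real.sqrt t + (lam - alp ^ 2 / 2) * t)

noncomputable def Bfun (lam alp t z : ℝ) : ℝ :=
  ∫ u in (0:ℝ)..t, lam * Real.exp ((lam + alp * z / Real.sqrt t) * u - alp ^ 2 * u ^ 2 / (2 * t))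

noncomputable def Gfun (lam alp z : ℝ) : ℝ := lam * Real.exp lam * Real.exp (alp * |z|)

lemma Afun_pos (lam alp t z : ℝ) : 0 < Afun lam alp t z := Real.exp_pos _

lemma jfun_eq (lam alp t φ z : ℝ) :
    jfun lam alp t φ z = Afun lam alp t z * φ + Bfun lam alp t z := rfl

lemma Afun_measurable (lam alp t : ℝ) : Measurable (Afun lam alp t) := by
  unfold Afun; fun_prop

lemma Gfun_continuous (lam alp : ℝ) : Continuous (Gfun lam alp) := by
  unfold Gfun; fun_prop

lemma Gfun_nonneg {lam alp : ℝ} (hlam : 0 ≤ lam) (z : ℝ) : 0 ≤ Gfun lam alp z := by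
  unfold Gfun; positivity

/-- Gaussian exponential moments. -/
lemma gauss_exp_int (c : ℝ) :
    Integrable (fun z => Real.exp (c * z)) (gaussianReal 0 1) ∧
    ∫ z, Real.exp (c * z) ∂(gaussianReal 0 1) = Real.exp (c ^ 2 / 2) := by
  have hrepr : gaussianReal 0 1 =
      volume.withDensity fun x => ((gaussianPDFReal 0 1 x).toNNReal : ℝ≥0∞) := by
    rw [gaussianReal_of_var_ne_zero 0 one_ne_zero]
    rfl
  have hmeas : Measurable fun x => (gaussianPDFReal 0 1 x).toNNReal :=
    (measurable_gaussianPDFReal 0 1).real_toNNReal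
  have hpt : ∀ z, gaussianPDFReal 0 1 z * Real.exp (c * z)
      = Real.exp (c ^ 2 / 2) * gaussianPDFReal c 1 z := by
    intro z
    simp only [gaussianPDFReal, NNReal.coe_one, mul_one]
    rw [mul_assoc, ← Real.exp_add, mul_comm (Real.exp _), mul_assoc, ← Real.exp_add]
    congr 2
    ring
  have hptsmul : (fun z => ((gaussianPDFReal 0 1 z).toNNReal : ℝ) • Real.exp (c * z))
      = fun z => Real.exp (c ^ 2 / 2) * gaussianPDFReal c 1 z := by
    funext z
    rw [smul_eq_mul, Real.coe_toNNReal _ (gaussianPDFReal_nonneg _ _ _), hpt]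
  constructor
  · rw [hrepr, integrable_withDensity_iff_integrable_coe_smul hmeas]
    rw [show (fun x => ((gaussianPDFReal 0 1 x).toNNReal : ℝ) • Real.exp (c * x))
      = fun z => Real.exp (c ^ 2 / 2) * gaussianPDFReal c 1 z from hptsmul]
    exact (integrable_gaussianPDFReal c 1).const_mul _
  · rw [hrepr, integral_withDensity_eq_integral_smul hmeas]
    simp only [NNReal.smul_def]
    rw [show (fun x => ((gaussianPDFReal 0 1 x).toNNReal : ℝ) • Real.exp (c * x))
      = fun z => Real.exp (c ^ 2 / 2) * gaussianPDFReal c 1 z from hptsmul]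
    rw [integral_const_mul, integral_gaussianPDFReal_eq_one c one_ne_zero, mul_one]

lemma gauss_exp_abs_int {c : ℝ} (hc : 0 ≤ c) :
    Integrable (fun z => Real.exp (c * |z|)) (gaussianReal 0 1) := by
  apply Integrable.mono' ((gauss_exp_int c).1.add (gauss_exp_int (-c)).1)
  · exact (Continuous.aestronglyMeasurable (by fun_prop))
  · refine Filter.Eventually.of_forall fun z => ?_
    rw [Real.norm_eq_abs, abs_of_pos (Real.exp_pos _)]
    rcases abs_choice z with h | h
    · rw [h]
      exact le_add_of_nonneg_right (Real.exp_pos _).le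
    · rw [h, show c * -z = -c * z by ring]
      exact le_add_of_nonneg_left (Real.exp_pos _).le

section BfunLemmas
variable {lam alp t : ℝ}

lemma Bfun_integrand_cont (z : ℝ) : Continuous
    (fun u => lam * Real.exp ((lam + alp * z / Real.sqrt t) * u - alp ^ 2 * u ^ 2 / (2 * t))) := by
  fun_prop

lemma div_sqrt_mul_le {u z₁ z₂ : ℝ} (halp : 0 < alp) (ht : 0 < t) (hz : z₁ ≤ z₂) (hu : 0 ≤ u) :
    alp * z₁ / Real.sqrt t * u ≤ alp * z₂ / Real.sqrt t * u := by
  have hst : 0 < Real.sqrt t := Real.sqrt_pos.mpr ht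
  rw [div_mul_eq_mul_div, div_mul_eq_mul_div]
  exact div_le_div_of_nonneg_right (mul_le_mul_of_nonneg_right (mul_le_mul_of_nonneg_left hz halp.le) hu) hst.le

lemma Bfun_nonneg (hlam : 0 ≤ lam) (ht : 0 ≤ t) (z : ℝ) : 0 ≤ Bfun lam alp t z := by
  apply intervalIntegral.integral_nonneg ht
  intro u _
  positivity

lemma Bfun_le (hlam : 0 < lam) (halp : 0 < alp) (ht : t ∈ Set.Ioc (0:ℝ) 1) (z : ℝ) :
    Bfun lam alp t z ≤ t * Gfun lam alp z := by
  have hst : 0 < Real.sqrt t := Real.sqrt_pos.mpr ht.1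
  have hsle : Real.sqrt t ≤ 1 := by
    rw [show (1:ℝ) = Real.sqrt 1 from (Real.sqrt_one).symm]
    exact Real.sqrt_le_sqrt ht.2
  have key : ∀ u ∈ Set.Icc (0:ℝ) t,
      lam * Real.exp ((lam + alp * z / Real.sqrt t) * u - alp ^ 2 * u ^ 2 / (2 * t))
        ≤ lam * Real.exp (lam + alp * |z|) := by
    intro u hu
    have hu0 : 0 ≤ u := hu.1
    have hut : u ≤ t := hu.2
    have h1 : lam * u ≤ lam := by nlinarith [ht.2]
    have h2 : alp * z / Real.sqrt t * u ≤ alp * |z| := by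
      have e1 : alp * z / Real.sqrt t * u ≤ alp * |z| / Real.sqrt t * u :=
        div_sqrt_mul_le halp ht.1 (le_abs_self z) hu0
      have e2 : alp * |z| / Real.sqrt t * u ≤ alp * |z| / Real.sqrt t * t := by
        apply mul_le_mul_of_nonneg_left hut
        positivity
      have e3 : alp * |z| / Real.sqrt t * t = alp * |z| * Real.sqrt t := by
        rw [div_mul_eq_mul_div, mul_div_assoc, Real.div_sqrt]
      have e4 : alp * |z| * Real.sqrt t ≤ alp * |z| :=
        (mul_le_mul_of_nonneg_left hsle (by positivity)).trans_eq (mul_one _)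
      linarith
    have h3 : 0 ≤ alp ^ 2 * u ^ 2 / (2 * t) := div_nonneg (by positivity) (by linarith [ht.1])
    have hexpand : (lam + alp * z / Real.sqrt t) * u = lam * u + alp * z / Real.sqrt t * u := by
      ring
    have : (lam + alp * z / Real.sqrt t) * u - alp ^ 2 * u ^ 2 / (2 * t) ≤ lam + alp * |z| := by
      rw [hexpand]; linarith
    exact mul_le_mul_of_nonneg_left (Real.exp_le_exp.mpr this) hlam.le
  calc Bfun lam alp t z ≤ ∫ _ in (0:ℝ)..t, lam * Real.exp (lam + alp * |z|) := by
        apply intervalIntegral.integral_mono_on ht.1.le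
          ((Bfun_integrand_cont z).intervalIntegrable _ _)
          (intervalIntegrable_const) key
    _ = t * (lam * Real.exp (lam + alp * |z|)) := by
        rw [intervalIntegral.integral_const, smul_eq_mul, sub_zero]
    _ = t * Gfun lam alp z := by
        rw [Gfun, Real.exp_add]; ring

lemma Bfun_mono (hlam : 0 < lam) (halp : 0 < alp) (ht : 0 < t) :
    Monotone (fun z => Bfun lam alp t z) := by
  intro z₁ z₂ hz
  apply intervalIntegral.integral_mono_on ht.le
    ((Bfun_integrand_cont z₁).intervalIntegrable _ _)
    ((Bfun_integrand_cont z₂).intervalIntegrable _ _)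
  intro u hu
  apply mul_le_mul_of_nonneg_left _ hlam.le
  apply Real.exp_le_exp.mpr
  have e := div_sqrt_mul_le halp ht hz hu.1
  have h1 : (lam + alp * z₁ / Real.sqrt t) * u = lam * u + alp * z₁ / Real.sqrt t * u := by ring
  have h2 : (lam + alp * z₂ / Real.sqrt t) * u = lam * u + alp * z₂ / Real.sqrt t * u := by ring
  rw [h1, h2]
  linarith

lemma Bfun_measurable (hlam : 0 < lam) (halp : 0 < alp) (ht : 0 < t) :
    Measurable (fun z => Bfun lam alp t z) :=
  (Bfun_mono hlam halp ht).measurable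

end BfunLemmas

section ChainLemmas
variable {Ω : Type*} [MeasurableSpace Ω] {μ : Measure Ω}
  {lam alp t φ : ℝ} {Z : ℕ → Ω → ℝ}

lemma oddsChain_rep (hZmeas : ∀ k, Measurable (Z k))
    (hBm : Measurable (fun z => Bfun lam alp t z)) :
    ∀ k : ℕ, ∃ F : ({x // x ∈ Finset.Icc 1 k} → ℝ) → ℝ, Measurable F ∧
      ∀ ω, oddsChain lam alp t φ Z k ω = F (fun i => Z i.1 ω) := by
  intro k
  induction k with
  | zero => exact ⟨fun _ => φ, measurable_const, fun ω => rfl⟩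
  | succ k ih =>
    obtain ⟨F, hF, hFeq⟩ := ih
    have hmem : (k+1) ∈ Finset.Icc 1 (k+1) := Finset.mem_Icc.mpr ⟨by omega, le_refl _⟩
    have hsub : ∀ i : {x // x ∈ Finset.Icc 1 k}, i.1 ∈ Finset.Icc 1 (k+1) := by
      intro i
      have := Finset.mem_Icc.mp i.2
      exact Finset.mem_Icc.mpr ⟨this.1, by omega⟩
    set r : ({x // x ∈ Finset.Icc 1 (k+1)} → ℝ) → ({x // x ∈ Finset.Icc 1 k} → ℝ) :=
      fun x i => x ⟨i.1, hsub i⟩ with hr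
    have hrm : Measurable r := measurable_pi_lambda _ (fun i => measurable_pi_apply _)
    refine ⟨fun x => Afun lam alp t (x ⟨k+1, hmem⟩) * F (r x) + Bfun lam alp t (x ⟨k+1, hmem⟩),
      ?_, ?_⟩
    · exact (((Afun_measurable lam alp t).comp (measurable_pi_apply _)).mul
        (hF.comp hrm)).add (hBm.comp (measurable_pi_apply _))
    · intro ω
      show jfun lam alp t (oddsChain lam alp t φ Z k ω) (Z (k+1) ω) = _
      rw [jfun_eq, hFeq ω]

lemma oddsChain_measurable (hZmeas : ∀ k, Measurable (Z k))
    (hBm : Measurable (fun z => Bfun lam alp t z)) (k : ℕ) :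
    Measurable (oddsChain lam alp t φ Z k) := by
  obtain ⟨F, hF, hFeq⟩ := oddsChain_rep (φ := φ) hZmeas hBm k
  have : oddsChain lam alp t φ Z k = fun ω => F (fun i => Z i.1 ω) := funext hFeq
  rw [this]
  exact hF.comp (measurable_pi_lambda _ (fun i => hZmeas i.1))

lemma oddsChain_indep (hZmeas : ∀ k, Measurable (Z k))
    (hBm : Measurable (fun z => Bfun lam alp t z))
    (hZindep : ProbabilityTheory.iIndepFun Z μ) (k : ℕ) :
    IndepFun (oddsChain lam alp t φ Z k) (Z (k+1)) μ := by
  obtain ⟨F, hF, hFeq⟩ := oddsChain_rep (φ := φ) hZmeas hBm k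
  have hdisj : Disjoint (Finset.Icc 1 k) ({k+1} : Finset ℕ) := by
    simp only [Finset.disjoint_singleton_right, Finset.mem_Icc]
    omega
  have h := hZindep.indepFun_finset (Finset.Icc 1 k) {k+1} hdisj hZmeas
  have hmem : (k+1) ∈ ({k+1} : Finset ℕ) := Finset.mem_singleton_self _
  have h2 := h.comp hF (measurable_pi_apply (⟨k+1, hmem⟩ : {x // x ∈ ({k+1} : Finset ℕ)}))
  have e1 : oddsChain lam alp t φ Z k
      = F ∘ (fun ω (i : {x // x ∈ Finset.Icc 1 k}) => Z i.1 ω) := funext hFeq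
  rw [e1]
  exact h2

lemma oddsChain_nonneg (hlam : 0 < lam) (ht : 0 ≤ t) (hφ : 0 ≤ φ) (k : ℕ) (ω : Ω) :
    0 ≤ oddsChain lam alp t φ Z k ω := by
  induction k with
  | zero => exact hφ
  | succ k ih =>
    show 0 ≤ jfun lam alp t (oddsChain lam alp t φ Z k ω) (Z (k+1) ω)
    rw [jfun_eq]
    exact add_nonneg (mul_nonneg (Real.exp_pos _).le ih) (Bfun_nonneg hlam.le ht _)

end ChainLemmas
set_option maxHeartbeats 1000000 in
/-- Uniform second-moment growth bound: there is `C > 0` depending only on `λ` and `α`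
such that for every step size `t ∈ (0, 1]`, every `k` and every initial odds `φ ≥ 0`,
`E[Φₖ²] ≤ C (φ² + φ + 1) e^{(2λ+α²)kt}`. -/
theorem oddsChain_second_moment_growth (lam alp : ℝ) (hlam : 0 < lam) (halp : 0 < alp)
    {Ω : Type*} [MeasurableSpace Ω] (μ : MeasureTheory.Measure Ω) [IsProbabilityMeasure μ]
    (Z : ℕ → Ω → ℝ) (hZmeas : ∀ k, Measurable (Z k))
    (hZdist : ∀ k, 1 ≤ k → μ.map (Z k) = ProbabilityTheory.gaussianReal 0 1)
    (hZindep : ProbabilityTheory.iIndepFun Z μ) :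
    ∃ C : ℝ, 0 < C ∧ ∀ t : ℝ, t ∈ Set.Ioc (0:ℝ) 1 → ∀ k : ℕ, ∀ φ : ℝ, 0 ≤ φ →
      Integrable (fun ω => (oddsChain lam alp t φ Z k ω) ^ 2) μ ∧
        ∫ ω, (oddsChain lam alp t φ Z k ω) ^ 2 ∂μ ≤
          C * (φ ^ 2 + φ + 1) * Real.exp ((2 * lam + alp ^ 2) * k * t) := by
  classical
  set ν : Measure ℝ := gaussianReal 0 1 with hν
  obtain ⟨M, hMdef⟩ : ∃ x : ℝ, x = ∫ z, Real.exp (2 * alp * |z|) ∂ν := ⟨_, rfl⟩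
  have hMint : Integrable (fun z => Real.exp (2 * alp * |z|)) ν :=
    gauss_exp_abs_int (by positivity)
  have hM1 : 1 ≤ M := by
    have h1 : (1:ℝ) = ∫ _z, (1:ℝ) ∂ν := by simp
    rw [hMdef, h1]
    refine integral_mono (integrable_const 1) hMint (fun z => ?_)
    have h2 : (0:ℝ) ≤ 2 * alp * |z| := by positivity
    linarith [Real.add_one_le_exp (2 * alp * |z|)]
  have hM0 : 0 < M := lt_of_lt_of_le one_pos hM1
  have hMle : ∀ c : ℝ, 0 ≤ c → c ≤ 2 * alp → ∫ z, Real.exp (c * |z|) ∂ν ≤ M := by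
    intro c hc hc2
    rw [hMdef]
    refine integral_mono (gauss_exp_abs_int hc) hMint (fun z => ?_)
    exact Real.exp_le_exp.mpr (mul_le_mul_of_nonneg_right hc2 (abs_nonneg z))
  obtain ⟨K, hK⟩ : ∃ x : ℝ, x = (lam ^ 2 + 2 * lam + 1) * Real.exp (2 * lam) * M := ⟨_, rfl⟩
  have hK0 : 0 < K := by rw [hK]; positivity
  obtain ⟨s, hs⟩ : ∃ x : ℝ, x = lam + alp ^ 2 := ⟨_, rfl⟩
  have hs0 : 0 < s := by rw [hs]; positivity
  obtain ⟨cc, hcc⟩ : ∃ x : ℝ, x = 2 * lam + alp ^ 2 := ⟨_, rfl⟩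
  have hcc0 : 0 < cc := by rw [hcc]; positivity
  rw [show 2 * lam + alp ^ 2 = cc from hcc.symm]
  obtain ⟨D, hD⟩ : ∃ x : ℝ, x = K / lam := ⟨_, rfl⟩
  have hD0 : 0 < D := by rw [hD]; positivity
  have hDlam : D * lam = K := by rw [hD]; field_simp
  obtain ⟨Q, hQ⟩ : ∃ x : ℝ, x = K / cc := ⟨_, rfl⟩
  have hQ0 : 0 < Q := by rw [hQ]; exact div_pos hK0 hcc0
  have hQcc : Q * cc = K := by rw [hQ]; field_simp
  have hexp2lam : Real.exp lam ≤ Real.exp (2 * lam) := Real.exp_le_exp.mpr (by linarith)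
  have hKg : lam * Real.exp lam * M ≤ K := by
    rw [hK]
    nlinarith [hM0, hlam, Real.exp_pos (2 * lam), Real.exp_pos lam, sq_nonneg lam,
      mul_nonneg (mul_nonneg hlam.le hM0.le) (sub_nonneg.mpr hexp2lam)]
  have hKag : 2 * (lam * Real.exp (2 * lam) * M) ≤ K := by
    rw [hK]
    nlinarith [hM0, hlam, Real.exp_pos (2 * lam), sq_nonneg (lam - 1),
      mul_pos (Real.exp_pos (2 * lam)) hM0]
  have hKgsq : lam ^ 2 * Real.exp (2 * lam) * M ≤ K := by
    rw [hK]
    nlinarith [hM0, hlam, mul_pos (Real.exp_pos (2 * lam)) hM0]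
  refine ⟨1 + K / s + K * D / s + Q, by positivity, ?_⟩
  intro t ht
  have ht0 : 0 < t := ht.1
  have hst : 0 < Real.sqrt t := Real.sqrt_pos.mpr ht0
  have hsle : Real.sqrt t ≤ 1 := by
    rw [show (1:ℝ) = Real.sqrt 1 from (Real.sqrt_one).symm]
    exact Real.sqrt_le_sqrt ht.2
  have hBm : Measurable (fun z => Bfun lam alp t z) := Bfun_measurable hlam halp ht0
  have ham := Afun_measurable lam alp t
  have hgm : Measurable (Gfun lam alp) := (Gfun_continuous lam alp).measurable
  -- ν-level facts
  have haeq : ∀ z, Afun lam alp t z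
      = Real.exp ((lam - alp ^ 2 / 2) * t) * Real.exp ((alp * Real.sqrt t) * z) := by
    intro z
    rw [Afun, ← Real.exp_add]
    congr 1
    ring
  have haint : Integrable (Afun lam alp t) ν := by
    rw [show Afun lam alp t = fun z =>
      Real.exp ((lam - alp ^ 2 / 2) * t) * Real.exp ((alp * Real.sqrt t) * z) from funext haeq]
    exact (gauss_exp_int _).1.const_mul _
  have haval : ∫ z, Afun lam alp t z ∂ν = Real.exp (lam * t) := by
    simp_rw [haeq]
    rw [integral_const_mul, (gauss_exp_int _).2, ← Real.exp_add]
    congr 1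
    rw [mul_pow, Real.sq_sqrt ht0.le]
    ring
  have hasqeq : ∀ z, (Afun lam alp t z) ^ 2
      = Real.exp ((2 * lam - alp ^ 2) * t) * Real.exp ((2 * alp * Real.sqrt t) * z) := by
    intro z
    rw [Afun, sq, ← Real.exp_add, ← Real.exp_add]
    congr 1
    ring
  have hasqint : Integrable (fun z => (Afun lam alp t z) ^ 2) ν := by
    rw [show (fun z => (Afun lam alp t z) ^ 2) = fun z =>
      Real.exp ((2 * lam - alp ^ 2) * t) * Real.exp ((2 * alp * Real.sqrt t) * z) from
      funext hasqeq]
    exact (gauss_exp_int _).1.const_mul _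
  have hasqval : ∫ z, (Afun lam alp t z) ^ 2 ∂ν = Real.exp (cc * t) := by
    simp_rw [hasqeq]
    rw [integral_const_mul, (gauss_exp_int _).2, ← Real.exp_add]
    congr 1
    rw [mul_pow, mul_pow, Real.sq_sqrt ht0.le, hcc]
    ring
  have hAle : ∀ z, Afun lam alp t z ≤ Real.exp lam * Real.exp (alp * |z|) := by
    intro z
    rw [Afun, ← Real.exp_add]
    apply Real.exp_le_exp.mpr
    have h1 : alp * z * Real.sqrt t ≤ alp * |z| := by
      have e1 : alp * z * Real.sqrt t ≤ alp * |z| * Real.sqrt t :=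
        mul_le_mul_of_nonneg_right (mul_le_mul_of_nonneg_left (le_abs_self z) halp.le) hst.le
      have e2 : alp * |z| * Real.sqrt t ≤ alp * |z| :=
        (mul_le_mul_of_nonneg_left hsle (by positivity)).trans_eq (mul_one _)
      linarith
    have h2 : (lam - alp ^ 2 / 2) * t ≤ lam := by nlinarith [ht.2, ht0, sq_nonneg alp]
    linarith
  have hgint : Integrable (Gfun lam alp) ν := by
    unfold Gfun
    exact (gauss_exp_abs_int halp.le).const_mul _
  have hgval : ∫ z, Gfun lam alp z ∂ν ≤ lam * Real.exp lam * M := by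
    unfold Gfun
    rw [integral_const_mul]
    exact mul_le_mul_of_nonneg_left (hMle alp halp.le (by linarith)) (by positivity)
  have hexpsq : ∀ x : ℝ, (Real.exp x) ^ 2 = Real.exp (2 * x) := fun x => by
    rw [sq, ← Real.exp_add, two_mul]
  have hagle : ∀ z, Afun lam alp t z * Gfun lam alp z
      ≤ lam * Real.exp (2 * lam) * Real.exp (2 * alp * |z|) := by
    intro z
    have h1 : Afun lam alp t z * Gfun lam alp z
        ≤ (Real.exp lam * Real.exp (alp * |z|)) * Gfun lam alp z :=
      mul_le_mul_of_nonneg_right (hAle z) (Gfun_nonneg hlam.le z)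
    have h2 : (Real.exp lam * Real.exp (alp * |z|)) * Gfun lam alp z
        = lam * Real.exp (2 * lam) * Real.exp (2 * alp * |z|) := by
      rw [Gfun, show (2:ℝ) * lam = lam + lam by ring,
        show 2 * alp * |z| = alp * |z| + alp * |z| by ring, Real.exp_add, Real.exp_add]
      ring
    linarith
  have hagint : Integrable (fun z => Afun lam alp t z * Gfun lam alp z) ν := by
    apply Integrable.mono' (hMint.const_mul (lam * Real.exp (2 * lam)))
    · exact (ham.mul hgm).aestronglyMeasurable
    · refine Filter.Eventually.of_forall fun z => ?_
      rw [Real.norm_eq_abs, abs_of_nonneg (mul_nonneg (Afun_pos lam alp t z).le (Gfun_nonneg hlam.le z))]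
      exact hagle z
  have hagval : ∫ z, Afun lam alp t z * Gfun lam alp z ∂ν ≤ lam * Real.exp (2 * lam) * M := by
    calc ∫ z, Afun lam alp t z * Gfun lam alp z ∂ν
        ≤ ∫ z, lam * Real.exp (2 * lam) * Real.exp (2 * alp * |z|) ∂ν :=
          integral_mono hagint (hMint.const_mul _) hagle
      _ = lam * Real.exp (2 * lam) * M := by rw [integral_const_mul, hMdef]
  have hgsqeq : ∀ z, (Gfun lam alp z) ^ 2
      = lam ^ 2 * Real.exp (2 * lam) * Real.exp (2 * alp * |z|) := by
    intro z
    rw [Gfun, mul_pow, mul_pow, hexpsq, hexpsq]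
    ring_nf
  have hgsqint : Integrable (fun z => (Gfun lam alp z) ^ 2) ν := by
    rw [show (fun z => (Gfun lam alp z) ^ 2) = fun z =>
      lam ^ 2 * Real.exp (2 * lam) * Real.exp (2 * alp * |z|) from funext hgsqeq]
    exact hMint.const_mul _
  have hgsqval : ∫ z, (Gfun lam alp z) ^ 2 ∂ν = lam ^ 2 * Real.exp (2 * lam) * M := by
    simp_rw [hgsqeq]
    rw [integral_const_mul, hMdef]
  -- transfer lemma
  have trans : ∀ (j : ℕ) (f : ℝ → ℝ), Measurable f → Integrable f ν →
      Integrable (fun ω => f (Z (j + 1) ω)) μ ∧ ∫ ω, f (Z (j + 1) ω) ∂μ = ∫ z, f z ∂ν := by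
    intro j f hfm hfi
    have hmap : μ.map (Z (j + 1)) = ν := hZdist (j + 1) (by omega)
    constructor
    · exact (integrable_map_measure hfm.aestronglyMeasurable
        (hZmeas (j + 1)).aemeasurable).mp (by rwa [hmap])
    · rw [← hmap, integral_map (hZmeas (j + 1)).aemeasurable hfm.aestronglyMeasurable]
  have hexplam1 : (1:ℝ) ≤ Real.exp (lam * t) := by
    linarith only [Real.add_one_le_exp (lam * t), mul_nonneg hlam.le ht0.le]
  -- main induction
  suffices H : ∀ φ : ℝ, 0 ≤ φ → ∀ k : ℕ,
      Integrable (fun ω => (oddsChain lam alp t φ Z k ω) ^ 2) μ ∧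
        ∫ ω, (oddsChain lam alp t φ Z k ω) ^ 2 ∂μ ≤
          (1 + K / s + K * D / s + Q) * (φ ^ 2 + φ + 1) * Real.exp (cc * k * t) by
    intro k φ hφ
    exact H φ hφ k
  intro φ hφ
  obtain ⟨P, hP⟩ : ∃ x : ℝ, x = K * (φ + D) / s := ⟨_, rfl⟩
  have hP0 : 0 ≤ P := by rw [hP]; positivity
  have hPs : P * s = K * (φ + D) := by rw [hP]; field_simp
  have hmain : ∀ k : ℕ,
      (Integrable (oddsChain lam alp t φ Z k) μ ∧
        Integrable (fun ω => (oddsChain lam alp t φ Z k ω) ^ 2) μ) ∧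
      (∫ ω, oddsChain lam alp t φ Z k ω ∂μ ≤
        Real.exp (lam * k * t) * φ + D * (Real.exp (lam * k * t) - 1)) ∧
      (∫ ω, (oddsChain lam alp t φ Z k ω) ^ 2 ∂μ ≤
        Real.exp (cc * k * t) * φ ^ 2 + P * (Real.exp (cc * k * t) - Real.exp (lam * k * t))
          + Q * (Real.exp (cc * k * t) - 1)) := by
    intro k
    induction k with
    | zero =>
      refine ⟨⟨integrable_const φ, integrable_const (φ ^ 2)⟩, ?_, ?_⟩ <;>
        simp [oddsChain]
    | succ k ih =>
      obtain ⟨⟨hWint, hW2int⟩, hW1, hW2⟩ := ih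
      set W := oddsChain lam alp t φ Z k with hWdef
      have hWmeas : Measurable W := oddsChain_measurable hZmeas hBm k
      have hW0 : ∀ ω, 0 ≤ W ω := fun ω => oddsChain_nonneg hlam ht0.le hφ k ω
      have hInd : IndepFun W (Z (k + 1)) μ := oddsChain_indep hZmeas hBm hZindep k
      have hIW0 : 0 ≤ ∫ ω, W ω ∂μ := integral_nonneg hW0
      obtain ⟨intA, valA⟩ := trans k _ ham haint
      obtain ⟨intA2, valA2⟩ := trans k _ (ham.pow_const 2) hasqint
      obtain ⟨intG, valG⟩ := trans k _ hgm hgint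
      obtain ⟨intAG, valAG⟩ := trans k _ (ham.mul hgm) hagint
      obtain ⟨intG2, valG2⟩ := trans k _ (hgm.pow_const 2) hgsqint
      have hIndA : IndepFun (fun ω => Afun lam alp t (Z (k + 1) ω)) W μ :=
        hInd.symm.comp ham measurable_id
      have hIndA2 : IndepFun (fun ω => (Afun lam alp t (Z (k + 1) ω)) ^ 2)
          (fun ω => (W ω) ^ 2) μ :=
        hInd.symm.comp (ham.pow_const 2) (measurable_id.pow_const 2)
      have hIndAG : IndepFun
          (fun ω => Afun lam alp t (Z (k + 1) ω) * Gfun lam alp (Z (k + 1) ω)) W μ :=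
        hInd.symm.comp (ham.mul hgm) measurable_id
      have intAW : Integrable (fun ω => Afun lam alp t (Z (k + 1) ω) * W ω) μ :=
        hIndA.integrable_mul intA hWint
      have intA2W2 : Integrable
          (fun ω => (Afun lam alp t (Z (k + 1) ω)) ^ 2 * (W ω) ^ 2) μ :=
        hIndA2.integrable_mul intA2 hW2int
      have intAGW : Integrable
          (fun ω => Afun lam alp t (Z (k + 1) ω) * Gfun lam alp (Z (k + 1) ω) * W ω) μ :=
        hIndAG.integrable_mul intAG hWint
      have intB : Integrable (fun ω => Bfun lam alp t (Z (k + 1) ω)) μ := by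
        apply Integrable.mono' (intG.const_mul t)
        · exact (hBm.comp (hZmeas (k + 1))).aestronglyMeasurable
        · refine Filter.Eventually.of_forall fun ω => ?_
          rw [Real.norm_eq_abs, abs_of_nonneg (Bfun_nonneg hlam.le ht0.le _)]
          exact Bfun_le hlam halp ht _
      have hnext : oddsChain lam alp t φ Z (k + 1)
          = fun ω => Afun lam alp t (Z (k + 1) ω) * W ω + Bfun lam alp t (Z (k + 1) ω) := by
        funext ω
        show jfun lam alp t (W ω) (Z (k + 1) ω) = _
        rw [jfun_eq]
      have intNext : Integrable (oddsChain lam alp t φ Z (k + 1)) μ := by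
        rw [hnext]; exact intAW.add intB
      -- first moment
      have hmulA : ∫ ω, Afun lam alp t (Z (k + 1) ω) * W ω ∂μ
          = Real.exp (lam * t) * ∫ ω, W ω ∂μ := by
        have h := hIndA.integral_mul_eq_mul_integral intA.aestronglyMeasurable hWint.aestronglyMeasurable
        rw [show (∫ ω, Afun lam alp t (Z (k + 1) ω) * W ω ∂μ)
          = integral μ ((fun ω => Afun lam alp t (Z (k + 1) ω)) * W) from rfl, h, valA, haval]
      have hBbound : ∫ ω, Bfun lam alp t (Z (k + 1) ω) ∂μ ≤ K * t := by
        calc ∫ ω, Bfun lam alp t (Z (k + 1) ω) ∂μ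
            ≤ ∫ ω, t * Gfun lam alp (Z (k + 1) ω) ∂μ :=
              integral_mono intB (intG.const_mul t) (fun ω => Bfun_le hlam halp ht _)
          _ = t * ∫ z, Gfun lam alp z ∂ν := by rw [integral_const_mul, valG]
          _ ≤ t * K := mul_le_mul_of_nonneg_left (hgval.trans hKg) ht0.le
          _ = K * t := mul_comm _ _
      have hI1 : ∫ ω, oddsChain lam alp t φ Z (k + 1) ω ∂μ ≤
          Real.exp (lam * (k + 1 : ℕ) * t) * φ
            + D * (Real.exp (lam * (k + 1 : ℕ) * t) - 1) := by
        rw [hnext, integral_add intAW intB, hmulA]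
        push_cast
        have hsplit : Real.exp (lam * ((k:ℝ) + 1) * t)
            = Real.exp (lam * t) * Real.exp (lam * (k:ℝ) * t) := by
          rw [← Real.exp_add]; ring_nf
        rw [hsplit]
        have m1 : Real.exp (lam * t) * ∫ ω, W ω ∂μ ≤ Real.exp (lam * t) *
            (Real.exp (lam * (k:ℝ) * t) * φ + D * (Real.exp (lam * (k:ℝ) * t) - 1)) :=
          mul_le_mul_of_nonneg_left hW1 (Real.exp_pos _).le
        have m2 : K * t ≤ D * (Real.exp (lam * t) - 1) := by
          rw [← hDlam]
          have h := Real.add_one_le_exp (lam * t)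
          have h2 : (0:ℝ) ≤ D * (Real.exp (lam * t) - 1 - lam * t) :=
            mul_nonneg hD0.le (by linarith only [h])
          nlinarith only [h2]
        linarith only [m1, m2, hBbound]
      -- second moment pointwise bound
      have hpt2 : ∀ ω, (oddsChain lam alp t φ Z (k + 1) ω) ^ 2 ≤
          (Afun lam alp t (Z (k + 1) ω)) ^ 2 * (W ω) ^ 2
            + 2 * t * (Afun lam alp t (Z (k + 1) ω) * Gfun lam alp (Z (k + 1) ω) * W ω)
            + t ^ 2 * (Gfun lam alp (Z (k + 1) ω)) ^ 2 := by
        intro ω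
        have heq : oddsChain lam alp t φ Z (k + 1) ω
            = Afun lam alp t (Z (k + 1) ω) * W ω + Bfun lam alp t (Z (k + 1) ω) := by
          show jfun lam alp t (W ω) (Z (k + 1) ω) = _
          rw [jfun_eq]
        rw [heq]
        have hA0 : 0 ≤ Afun lam alp t (Z (k + 1) ω) := (Afun_pos _ _ _ _).le
        have hb0 : 0 ≤ Bfun lam alp t (Z (k + 1) ω) := Bfun_nonneg hlam.le ht0.le _
        have hble : Bfun lam alp t (Z (k + 1) ω) ≤ t * Gfun lam alp (Z (k + 1) ω) :=
          Bfun_le hlam halp ht _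
        have hd : 0 ≤ t * Gfun lam alp (Z (k + 1) ω) - Bfun lam alp t (Z (k + 1) ω) := by
          linarith
        nlinarith only [mul_nonneg (mul_nonneg hA0 (hW0 ω)) hd,
          mul_nonneg hd (by linarith : (0:ℝ) ≤ t * Gfun lam alp (Z (k + 1) ω)
            + Bfun lam alp t (Z (k + 1) ω))]
      have intbnd : Integrable (fun ω =>
          (Afun lam alp t (Z (k + 1) ω)) ^ 2 * (W ω) ^ 2
            + 2 * t * (Afun lam alp t (Z (k + 1) ω) * Gfun lam alp (Z (k + 1) ω) * W ω)
            + t ^ 2 * (Gfun lam alp (Z (k + 1) ω)) ^ 2) μ :=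
        (intA2W2.add (intAGW.const_mul (2 * t))).add (intG2.const_mul (t ^ 2))
      have intNext2 : Integrable (fun ω => (oddsChain lam alp t φ Z (k + 1) ω) ^ 2) μ := by
        apply Integrable.mono' intbnd
        · exact ((oddsChain_measurable hZmeas hBm (k + 1)).pow_const 2).aestronglyMeasurable
        · refine Filter.Eventually.of_forall fun ω => ?_
          rw [Real.norm_eq_abs, abs_of_nonneg (sq_nonneg _)]
          exact hpt2 ω
      -- second moment integral bound
      have f1 : ∫ ω, (Afun lam alp t (Z (k + 1) ω)) ^ 2 * (W ω) ^ 2 ∂μ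
          = Real.exp (cc * t) * ∫ ω, (W ω) ^ 2 ∂μ := by
        have h := hIndA2.integral_mul_eq_mul_integral intA2.aestronglyMeasurable hW2int.aestronglyMeasurable
        rw [show (∫ ω, (Afun lam alp t (Z (k + 1) ω)) ^ 2 * (W ω) ^ 2 ∂μ)
          = integral μ ((fun ω => (Afun lam alp t (Z (k + 1) ω)) ^ 2)
            * (fun ω => (W ω) ^ 2)) from rfl, h, valA2, hasqval]
      have f2 : ∫ ω, Afun lam alp t (Z (k + 1) ω) * Gfun lam alp (Z (k + 1) ω) * W ω ∂μ
          ≤ lam * Real.exp (2 * lam) * M * ∫ ω, W ω ∂μ := by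
        have h := hIndAG.integral_mul_eq_mul_integral intAG.aestronglyMeasurable hWint.aestronglyMeasurable
        rw [show (∫ ω, Afun lam alp t (Z (k + 1) ω) * Gfun lam alp (Z (k + 1) ω) * W ω ∂μ)
          = integral μ ((fun ω => Afun lam alp t (Z (k + 1) ω) * Gfun lam alp (Z (k + 1) ω))
            * W) from rfl, h, show ∫ ω, Afun lam alp t (Z (k + 1) ω) * Gfun lam alp (Z (k + 1) ω) ∂μ
              = ∫ z, Afun lam alp t z * Gfun lam alp z ∂ν from valAG]
        exact mul_le_mul_of_nonneg_right hagval hIW0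
      have f3 : ∫ ω, (Gfun lam alp (Z (k + 1) ω)) ^ 2 ∂μ = lam ^ 2 * Real.exp (2 * lam) * M := by
        rw [valG2, hgsqval]
      have hI2' : ∫ ω, (oddsChain lam alp t φ Z (k + 1) ω) ^ 2 ∂μ ≤
          Real.exp (cc * t) * (∫ ω, (W ω) ^ 2 ∂μ) + K * t * (∫ ω, W ω ∂μ) + K * t ^ 2 := by
        have step1 := integral_mono intNext2 intbnd hpt2
        have i2 : Integrable (fun ω => 2 * t * (Afun lam alp t (Z (k + 1) ω)
            * Gfun lam alp (Z (k + 1) ω) * W ω)) μ := intAGW.const_mul (2 * t)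
        have i3 : Integrable (fun ω => t ^ 2 * (Gfun lam alp (Z (k + 1) ω)) ^ 2) μ :=
          intG2.const_mul (t ^ 2)
        have i12 : Integrable (fun ω => (Afun lam alp t (Z (k + 1) ω)) ^ 2 * (W ω) ^ 2
            + 2 * t * (Afun lam alp t (Z (k + 1) ω) * Gfun lam alp (Z (k + 1) ω) * W ω)) μ :=
          intA2W2.add i2
        rw [integral_add i12 i3, integral_add intA2W2 i2, integral_const_mul,
          integral_const_mul, f1, f3] at step1
        have g2 : 2 * t * (∫ ω, Afun lam alp t (Z (k + 1) ω) * Gfun lam alp (Z (k + 1) ω)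
            * W ω ∂μ) ≤ K * t * (∫ ω, W ω ∂μ) := by
          have e1 : 2 * t * (∫ ω, Afun lam alp t (Z (k + 1) ω) * Gfun lam alp (Z (k + 1) ω)
              * W ω ∂μ) ≤ 2 * t * (lam * Real.exp (2 * lam) * M * ∫ ω, W ω ∂μ) :=
            mul_le_mul_of_nonneg_left f2 (by positivity)
          nlinarith only [e1, mul_le_mul_of_nonneg_right hKag (mul_nonneg ht0.le hIW0)]
        have g3 : t ^ 2 * (lam ^ 2 * Real.exp (2 * lam) * M) ≤ K * t ^ 2 := by
          nlinarith only [mul_le_mul_of_nonneg_right hKgsq (sq_nonneg t)]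
        linarith only [step1, g2, g3]
      -- assemble second moment invariant
      have hIW20 : 0 ≤ ∫ ω, (W ω) ^ 2 ∂μ := integral_nonneg (fun ω => sq_nonneg _)
      have hWle : ∫ ω, W ω ∂μ ≤ Real.exp (lam * (k:ℝ) * t) * (φ + D) := by
        nlinarith only [hW1, hD0]
      have hexplamk : (1:ℝ) ≤ Real.exp (lam * (k:ℝ) * t) := by
        linarith only [Real.add_one_le_exp (lam * (k:ℝ) * t),
          mul_nonneg (mul_nonneg hlam.le (Nat.cast_nonneg k)) ht0.le]
      have hectl : Real.exp (lam * t) + s * t ≤ Real.exp (cc * t) := by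
        have e1 : Real.exp (cc * t) = Real.exp (lam * t) * Real.exp (s * t) := by
          rw [← Real.exp_add]; congr 1; rw [hcc, hs]; ring
        have h1 : (0:ℝ) ≤ (Real.exp (lam * t) - 1) * (s * t) :=
          mul_nonneg (by linarith only [hexplam1]) (mul_nonneg hs0.le ht0.le)
        have h2 : (0:ℝ) ≤ Real.exp (lam * t) * (Real.exp (s * t) - 1 - s * t) :=
          mul_nonneg (Real.exp_pos _).le (by linarith only [Real.add_one_le_exp (s * t)])
        rw [e1]
        nlinarith only [h1, h2]
      have h1 : K * t * (Real.exp (lam * (k:ℝ) * t) * (φ + D)) ≤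
          P * Real.exp (lam * (k:ℝ) * t) * (Real.exp (cc * t) - Real.exp (lam * t)) := by
        have e1 : K * (φ + D) * t ≤ P * (Real.exp (cc * t) - Real.exp (lam * t)) := by
          rw [← hPs]
          calc P * s * t = P * (s * t) := by ring
            _ ≤ P * (Real.exp (cc * t) - Real.exp (lam * t)) :=
              mul_le_mul_of_nonneg_left (by linarith only [hectl]) hP0
        nlinarith only [mul_le_mul_of_nonneg_right e1 (Real.exp_pos (lam * (k:ℝ) * t)).le]
      have h2 : K * t ^ 2 ≤ Q * (Real.exp (cc * t) - 1) := by
        have e1 : cc * t + 1 ≤ Real.exp (cc * t) := Real.add_one_le_exp _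
        have htt : t ^ 2 ≤ t := by nlinarith only [mul_le_mul_of_nonneg_left ht.2 ht0.le]
        rw [← hQcc]
        calc Q * cc * t ^ 2 ≤ Q * cc * t := mul_le_mul_of_nonneg_left htt (by positivity)
          _ = Q * (cc * t) := by ring
          _ ≤ Q * (Real.exp (cc * t) - 1) := mul_le_mul_of_nonneg_left (by linarith only [e1]) hQ0.le
      have hI2 : ∫ ω, (oddsChain lam alp t φ Z (k + 1) ω) ^ 2 ∂μ ≤
          Real.exp (cc * (k + 1 : ℕ) * t) * φ ^ 2
            + P * (Real.exp (cc * (k + 1 : ℕ) * t) - Real.exp (lam * (k + 1 : ℕ) * t))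
            + Q * (Real.exp (cc * (k + 1 : ℕ) * t) - 1) := by
        push_cast
        have ecc : Real.exp (cc * ((k:ℝ) + 1) * t)
            = Real.exp (cc * t) * Real.exp (cc * (k:ℝ) * t) := by
          rw [← Real.exp_add]; ring_nf
        have elam : Real.exp (lam * ((k:ℝ) + 1) * t)
            = Real.exp (lam * t) * Real.exp (lam * (k:ℝ) * t) := by
          rw [← Real.exp_add]; ring_nf
        rw [ecc, elam]
        have hc2 : Real.exp (cc * t) * (∫ ω, (W ω) ^ 2 ∂μ) ≤ Real.exp (cc * t) *
            (Real.exp (cc * (k:ℝ) * t) * φ ^ 2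
              + P * (Real.exp (cc * (k:ℝ) * t) - Real.exp (lam * (k:ℝ) * t))
              + Q * (Real.exp (cc * (k:ℝ) * t) - 1)) :=
          mul_le_mul_of_nonneg_left hW2 (Real.exp_pos _).le
        have m3 : K * t * (∫ ω, W ω ∂μ) ≤ K * t * (Real.exp (lam * (k:ℝ) * t) * (φ + D)) :=
          mul_le_mul_of_nonneg_left hWle (by positivity)
        linarith only [hI2', hc2, m3, h1, h2]
      exact ⟨⟨intNext, intNext2⟩, hI1, hI2⟩
  intro k
  obtain ⟨⟨_, hint2⟩, _, hb2⟩ := hmain k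
  refine ⟨hint2, ?_⟩
  have e0 : (1:ℝ) ≤ Real.exp (lam * (k:ℝ) * t) := by
    linarith only [Real.add_one_le_exp (lam * (k:ℝ) * t),
      mul_nonneg (mul_nonneg hlam.le (Nat.cast_nonneg k)) ht0.le]
  have e1 : (0:ℝ) < Real.exp (cc * (k:ℝ) * t) := Real.exp_pos _
  have g1 : ∫ ω, (oddsChain lam alp t φ Z k ω) ^ 2 ∂μ ≤
      (φ ^ 2 + P + Q) * Real.exp (cc * (k:ℝ) * t) := by
    linarith only [hb2, mul_nonneg hP0 (Real.exp_pos (lam * (k:ℝ) * t)).le, hQ0.le]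
  have hPP : P = K / s * φ + K * D / s := by
    rw [hP]; field_simp
  have g2 : φ ^ 2 + P + Q ≤ (1 + K / s + K * D / s + Q) * (φ ^ 2 + φ + 1) := by
    have hks : 0 ≤ K / s := by positivity
    have hkds : 0 ≤ K * D / s := by positivity
    rw [hPP]
    nlinarith only [sq_nonneg φ, hφ, hks, hkds, hQ0.le, mul_nonneg hks (sq_nonneg φ),
      mul_nonneg hks hφ, mul_nonneg hkds (sq_nonneg φ), mul_nonneg hkds hφ,
      mul_nonneg hQ0.le (sq_nonneg φ), mul_nonneg hQ0.le hφ]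
  calc ∫ ω, (oddsChain lam alp t φ Z k ω) ^ 2 ∂μ
      ≤ (φ ^ 2 + P + Q) * Real.exp (cc * (k:ℝ) * t) := g1
    _ ≤ (1 + K / s + K * D / s + Q) * (φ ^ 2 + φ + 1) * Real.exp (cc * (k:ℝ) * t) :=
        mul_le_mul_of_nonneg_right g2 e1.le
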